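/- Let ξ and η be positive irrational real numbers and m a positive natural number with ξ·η = m. Suppose the indices (n, k) with n ≥ 1 and k ≥ 1 are connected, i.e. p_{n−1}·P_{k−1} = m·q_{n−1}·Q_{k−1}. Then Q_{k−1} divides p_{n−1} and q_{n−1} divides P_{k−1}, and the natural numbers r = p_{n−1}/Q_{k−1} and s = P_{k−1}/q_{n−1} satisfy r·s = m and −2r + 2 ≤ r·b_n − s·B_k ≤ 2s − 2. -/

import Mathlib

set_option maxHeartbeats 1000000


/-- Complete quotients: `cq ξ 0 = ξ`, `cq ξ (n+1) = 1/(cq ξ n - ⌊cq ξ n⌋)`. -/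
noncomputable def cq (ξ : ℝ) : ℕ → ℝ
  | 0 => ξ
  | n + 1 => 1 / (cq ξ n - ⌊cq ξ n⌋)

/-- Partial quotients: `pquot ξ n = b_n = ⌊ξ_n⌋`. -/
noncomputable def pquot (ξ : ℝ) (n : ℕ) : ℤ := ⌊cq ξ n⌋

/-- Convergent numerators, shifted by one: `cnum ξ 0 = p_{-1} = 1`,
`cnum ξ 1 = p_0 = b_0`, and `cnum ξ (n+1) = p_n = b_n p_{n-1} + p_{n-2}`. -/
noncomputable def cnum (ξ : ℝ) : ℕ → ℤ
  | 0 => 1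
  | 1 => pquot ξ 0
  | n + 2 => pquot ξ (n + 1) * cnum ξ (n + 1) + cnum ξ n

/-- Convergent denominators, shifted by one: `cden ξ 0 = q_{-1} = 0`,
`cden ξ 1 = q_0 = 1`, and `cden ξ (n+1) = q_n = b_n q_{n-1} + q_{n-2}`. -/
noncomputable def cden (ξ : ℝ) : ℕ → ℤ
  | 0 => 0
  | 1 => 1
  | n + 2 => pquot ξ (n + 1) * cden ξ (n + 1) + cden ξ n

lemma cq_irrational {ξ : ℝ} (h : Irrational ξ) : ∀ n, Irrational (cq ξ n)
  | 0 => h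
  | (n+1) => by
      have ih := cq_irrational h n
      have h1 : Irrational (cq ξ n - ⌊cq ξ n⌋) := ih.sub_intCast _
      show Irrational (1 / (cq ξ n - ⌊cq ξ n⌋))
      simpa [one_div] using h1.inv

lemma cq_gt_one {ξ : ℝ} (h : Irrational ξ) (n : ℕ) : 1 < cq ξ (n+1) := by
  have ih := cq_irrational h n
  have hfr : Int.fract (cq ξ n) = cq ξ n - ⌊cq ξ n⌋ := rfl
  have h0 : 0 < cq ξ n - ⌊cq ξ n⌋ := by
    rw [← hfr]
    exact Int.fract_pos.mpr (fun he => (ih.ne_int ⌊cq ξ n⌋) he)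
  have h1 : cq ξ n - ⌊cq ξ n⌋ < 1 := by
    rw [← hfr]; exact Int.fract_lt_one _
  show 1 < 1 / (cq ξ n - ⌊cq ξ n⌋)
  rw [lt_div_iff₀ h0]
  linarith

lemma pquot_pos {ξ : ℝ} (h : Irrational ξ) (n : ℕ) : 1 ≤ pquot ξ (n+1) := by
  have := cq_gt_one h n
  exact Int.le_floor.mpr (by exact_mod_cast this.le)

lemma pquot_zero_nonneg {ξ : ℝ} (h : 0 < ξ) : 0 ≤ pquot ξ 0 :=
  Int.le_floor.mpr (by exact_mod_cast h.le)

lemma cden_nonneg {ξ : ℝ} (h : Irrational ξ) : ∀ n, 0 ≤ cden ξ n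
  | 0 => le_refl 0
  | 1 => zero_le_one
  | (n+2) => by
      have h1 := cden_nonneg h (n+1)
      have h2 := cden_nonneg h n
      have h3 := pquot_pos h n
      show 0 ≤ pquot ξ (n+1) * cden ξ (n+1) + cden ξ n
      nlinarith

lemma cden_pos {ξ : ℝ} (h : Irrational ξ) : ∀ n, 1 ≤ cden ξ (n+1)
  | 0 => le_refl 1
  | (n+1) => by
      have h1 := cden_pos h n
      have h2 := cden_nonneg h n
      have h3 := pquot_pos h n
      show 1 ≤ pquot ξ (n+1) * cden ξ (n+1) + cden ξ n
      nlinarith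

lemma cden_mono {ξ : ℝ} (h : Irrational ξ) : ∀ n, cden ξ n ≤ cden ξ (n+1)
  | 0 => zero_le_one
  | (n+1) => by
      have h1 := cden_pos h n
      have h2 := cden_nonneg h n
      have h3 := pquot_pos h n
      show cden ξ (n+1) ≤ pquot ξ (n+1) * cden ξ (n+1) + cden ξ n
      nlinarith

lemma cden_gap {ξ : ℝ} (h : Irrational ξ) (n : ℕ) :
    cden ξ (n+2) + 1 ≤ cden ξ (n+3) := by
  have h1 := cden_pos h n
  have h2 := cden_pos h (n+1)
  have h3 := pquot_pos h (n+1)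
  show cden ξ (n+2) + 1 ≤ pquot ξ (n+2) * cden ξ (n+2) + cden ξ (n+1)
  nlinarith

lemma cnum_nonneg {ξ : ℝ} (hp : 0 < ξ) (h : Irrational ξ) : ∀ n, 0 ≤ cnum ξ n
  | 0 => zero_le_one
  | 1 => pquot_zero_nonneg hp
  | (n+2) => by
      have h1 := cnum_nonneg hp h (n+1)
      have h2 := cnum_nonneg hp h n
      have h3 := pquot_pos h n
      show 0 ≤ pquot ξ (n+1) * cnum ξ (n+1) + cnum ξ n
      nlinarith

lemma cf_det (ξ : ℝ) : ∀ n : ℕ, cnum ξ n * cden ξ (n+1) - cnum ξ (n+1) * cden ξ n = (-1)^n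
  | 0 => by simp [cnum, cden]
  | (n+1) => by
      have ih := cf_det ξ n
      show cnum ξ (n+1) * (pquot ξ (n+1) * cden ξ (n+1) + cden ξ n)
          - (pquot ξ (n+1) * cnum ξ (n+1) + cnum ξ n) * cden ξ (n+1) = (-1)^(n+1)
      have : (-1:ℤ)^(n+1) = -(-1)^n := by ring
      rw [this, ← ih]; ring

lemma cq_inv {ξ : ℝ} (h : Irrational ξ) (n : ℕ) :
    (cq ξ n - (⌊cq ξ n⌋ : ℝ)) * cq ξ (n+1) = 1 := by
  have hirr := cq_irrational h n
  have h1 : cq ξ n - (⌊cq ξ n⌋ : ℝ) ≠ 0 := by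
    intro he
    exact (hirr.ne_int ⌊cq ξ n⌋) (sub_eq_zero.mp he)
  have hq : cq ξ (n+1) = 1 / (cq ξ n - ⌊cq ξ n⌋) := rfl
  rw [hq, mul_one_div]
  exact div_self h1

lemma cq_conv {ξ : ℝ} (h : Irrational ξ) : ∀ n : ℕ,
    ξ * ((cden ξ (n+1) : ℝ) * cq ξ (n+1) + (cden ξ n : ℝ))
      = (cnum ξ (n+1) : ℝ) * cq ξ (n+1) + (cnum ξ n : ℝ)
  | 0 => by
      have hinv := cq_inv h 0
      have hcq0 : cq ξ 0 = ξ := rfl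
      have hpq : ((pquot ξ 0 : ℤ) : ℝ) = (⌊cq ξ 0⌋ : ℝ) := rfl
      show ξ * (((1:ℤ):ℝ) * cq ξ 1 + ((0:ℤ):ℝ)) = ((pquot ξ 0 : ℤ) : ℝ) * cq ξ 1 + ((1:ℤ):ℝ)
      rw [hpq]
      push_cast
      simp only [show cq ξ 0 = ξ from rfl] at hinv ⊢
      linear_combination hinv
  | (n+1) => by
      have ih := cq_conv h n
      have hinv := cq_inv h (n+1)
      have hcd : cden ξ (n+2) = pquot ξ (n+1) * cden ξ (n+1) + cden ξ n := rfl
      have hcn : cnum ξ (n+2) = pquot ξ (n+1) * cnum ξ (n+1) + cnum ξ n := rfl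
      have hpq : ((pquot ξ (n+1) : ℤ) : ℝ) = (⌊cq ξ (n+1)⌋ : ℝ) := rfl
      rw [hcd, hcn]
      push_cast
      rw [hpq]
      linear_combination (cq ξ (n+2)) * ih
        - (ξ * ((cden ξ (n+1) : ℤ) : ℝ) - ((cnum ξ (n+1) : ℤ) : ℝ)) * hinv

lemma cq_sign {ξ : ℝ} (h : Irrational ξ) (n : ℕ) :
    ((cden ξ (n+1) : ℝ) * ξ - (cnum ξ (n+1) : ℝ)) *
      ((cden ξ (n+1) : ℝ) * cq ξ (n+1) + (cden ξ n : ℝ)) = (-1)^n := by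
  have hdet : ((cnum ξ n : ℝ)) * (cden ξ (n+1) : ℝ) - (cnum ξ (n+1) : ℝ) * (cden ξ n : ℝ)
      = (-1)^n := by exact_mod_cast cf_det ξ n
  linear_combination ((cden ξ (n+1) : ℝ)) * cq_conv h n + hdet

lemma pquot_lt_cq {ξ : ℝ} (h : Irrational ξ) (n : ℕ) : (pquot ξ n : ℝ) < cq ξ n :=
  lt_of_le_of_ne (Int.floor_le _) (fun he => (cq_irrational h n).ne_int _ he.symm)

lemma cq_lt_pquot {ξ : ℝ} (n : ℕ) : cq ξ n < (pquot ξ n : ℝ) + 1 :=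
  Int.lt_floor_add_one _

lemma conn_pos (ξ η : ℝ) (m : ℕ) (hξpos : 0 < ξ) (hηpos : 0 < η)
    (hξirr : Irrational ξ) (hηirr : Irrational η) (hm : 0 < m)
    (n k : ℕ) (hn : 1 ≤ n) (hk : 1 ≤ k)
    (hconn : cnum ξ n * cnum η k = (m : ℤ) * cden ξ n * cden η k) :
    1 ≤ cnum ξ n ∧ 1 ≤ cnum η k := by
  obtain ⟨n1, rfl⟩ : ∃ j, n = j+1 := ⟨n-1, by omega⟩
  obtain ⟨k1, rfl⟩ : ∃ j, k = j+1 := ⟨k-1, by omega⟩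
  have hq1 := cden_pos hξirr n1
  have hQ1 := cden_pos hηirr k1
  have hp0 := cnum_nonneg hξpos hξirr (n1+1)
  have hP0 := cnum_nonneg hηpos hηirr (k1+1)
  have hm1 : (1:ℤ) ≤ (m:ℤ) := by exact_mod_cast hm
  have h1 : (1:ℤ) ≤ (m:ℤ) * cden ξ (n1+1) := by nlinarith
  have h2 : (1:ℤ) ≤ (m:ℤ) * cden ξ (n1+1) * cden η (k1+1) := by nlinarith
  constructor
  · nlinarith
  · nlinarith

lemma conn_parity (ξ η : ℝ) (m : ℕ) (hξpos : 0 < ξ) (hηpos : 0 < η)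
    (hξirr : Irrational ξ) (hηirr : Irrational η) (hm : 0 < m)
    (hmul : ξ * η = m) (n k : ℕ) (hn : 1 ≤ n) (hk : 1 ≤ k)
    (hconn : cnum ξ n * cnum η k = (m : ℤ) * cden ξ n * cden η k) :
    (Even n ∧ Odd k) ∨ (Odd n ∧ Even k) := by
  obtain ⟨hp1, hP1⟩ := conn_pos ξ η m hξpos hηpos hξirr hηirr hm n k hn hk hconn
  obtain ⟨n1, rfl⟩ : ∃ j, n = j+1 := ⟨n-1, by omega⟩
  obtain ⟨k1, rfl⟩ : ∃ j, k = j+1 := ⟨k-1, by omega⟩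
  have hsξ := cq_sign hξirr n1
  have hsη := cq_sign hηirr k1
  have hq1 : (1:ℝ) ≤ (cden ξ (n1+1) : ℝ) := by exact_mod_cast cden_pos hξirr n1
  have hQ1 : (1:ℝ) ≤ (cden η (k1+1) : ℝ) := by exact_mod_cast cden_pos hηirr k1
  have hq'0 : (0:ℝ) ≤ (cden ξ n1 : ℝ) := by exact_mod_cast cden_nonneg hξirr n1
  have hQ'0 : (0:ℝ) ≤ (cden η k1 : ℝ) := by exact_mod_cast cden_nonneg hηirr k1
  have hx1 : 1 < cq ξ (n1+1) := cq_gt_one hξirr n1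
  have hy1 : 1 < cq η (k1+1) := cq_gt_one hηirr k1
  have hdξ : (0:ℝ) < (cden ξ (n1+1) : ℝ) * cq ξ (n1+1) + (cden ξ n1 : ℝ) := by nlinarith
  have hdη : (0:ℝ) < (cden η (k1+1) : ℝ) * cq η (k1+1) + (cden η k1 : ℝ) := by nlinarith
  have hp1R : (1:ℝ) ≤ (cnum ξ (n1+1) : ℝ) := by exact_mod_cast hp1
  have hP1R : (1:ℝ) ≤ (cnum η (k1+1) : ℝ) := by exact_mod_cast hP1
  have hconnR : (cnum ξ (n1+1) : ℝ) * (cnum η (k1+1) : ℝ)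
      = (m:ℝ) * (cden ξ (n1+1) : ℝ) * (cden η (k1+1) : ℝ) := by exact_mod_cast hconn
  have hkey : (cden ξ (n1+1) : ℝ) * ξ * ((cden η (k1+1) : ℝ) * η)
      = (cnum ξ (n1+1) : ℝ) * (cnum η (k1+1) : ℝ) := by
    linear_combination ((cden ξ (n1+1) : ℝ)) * ((cden η (k1+1) : ℝ)) * hmul - hconnR
  rcases Nat.even_or_odd (n1+1) with he | ho
  · rcases Nat.even_or_odd (k1+1) with he' | ho'
    · exfalso
      have hon1 : Odd n1 := by
        rcases Nat.even_or_odd n1 with h | h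
        · exact absurd he (by simp [Nat.even_add_one, h]) 
        · exact h
      have hok1 : Odd k1 := by
        rcases Nat.even_or_odd k1 with h | h
        · exact absurd he' (by simp [Nat.even_add_one, h])
        · exact h
      rw [hon1.neg_one_pow] at hsξ
      rw [hok1.neg_one_pow] at hsη
      have hlt1 : (cden ξ (n1+1) : ℝ) * ξ < (cnum ξ (n1+1) : ℝ) := by nlinarith
      have hlt2 : (cden η (k1+1) : ℝ) * η < (cnum η (k1+1) : ℝ) := by nlinarith
      have hpos1 : (0:ℝ) ≤ (cden ξ (n1+1) : ℝ) * ξ := by positivity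
      have hpos2 : (0:ℝ) ≤ (cden η (k1+1) : ℝ) * η := by positivity
      have hfin := mul_lt_mul'' hlt1 hlt2 hpos1 hpos2
      linarith [hkey]
    · exact Or.inl ⟨he, ho'⟩
  · rcases Nat.even_or_odd (k1+1) with he' | ho'
    · exact Or.inr ⟨ho, he'⟩
    · exfalso
      have hen1 : Even n1 := by
        rcases Nat.even_or_odd n1 with h | h
        · exact h
        · exact absurd ho (by simp [Nat.even_add_one, Nat.not_even_iff_odd.mpr h])
      have hek1 : Even k1 := by
        rcases Nat.even_or_odd k1 with h | h
        · exact h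
        · exact absurd ho' (by simp [Nat.even_add_one, Nat.not_even_iff_odd.mpr h])
      rw [hen1.neg_one_pow] at hsξ
      rw [hek1.neg_one_pow] at hsη
      have hlt1 : (cnum ξ (n1+1) : ℝ) < (cden ξ (n1+1) : ℝ) * ξ := by nlinarith
      have hlt2 : (cnum η (k1+1) : ℝ) < (cden η (k1+1) : ℝ) * η := by nlinarith
      have hfin := mul_lt_mul'' hlt1 hlt2
        (by linarith : (0:ℝ) ≤ (cnum ξ (n1+1) : ℝ))
        (by linarith : (0:ℝ) ≤ (cnum η (k1+1) : ℝ))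
      linarith [hkey]

lemma real_key (x y ξ η d e p q p' q' P Q P' Q' r s : ℝ)
    (hd : d * (q*x + q') = 1) (he : e * (Q*y + Q') = 1)
    (hdd : d = p - q*ξ) (hee : e = Q*η - P)
    (heξ : e * ξ = s * d)
    (hrR : p = Q*r) (hsR : P = q*s)
    (hd0 : 0 < d) (he0 : 0 < e) (hξ0 : 0 < ξ)
    (hq1 : 1 ≤ q) (hQ1 : 1 ≤ Q) (hs1 : 1 ≤ s) (hr1 : 1 ≤ r)
    (hq'1 : 1 ≤ q') (hqm : q' ≤ q) (hQ'0 : 0 ≤ Q') (hQgap : Q' + 1 ≤ Q)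
    (hp1 : 1 ≤ p) (hP1 : 1 ≤ P) :
    s*y < r*(x+1) ∧ r*x < s*(y+1) := by
  have hK1 : (r*(x+1) - s*y) * (q*d*(Q*(e*ξ)))
      = s*d^2*(1 + p*(q-q') + P*Q') := by
    linear_combination (r*Q*e*ξ) * hd - (s*q*d*ξ) * he
      + (r*Q*(1-d*q'+d*q) + s*q*d*Q') * heξ - (s*d) * hdd
      - (s*d*(1-d*q'+d*q)) * hrR - (s*d^2*Q') * hsR
  have hK2 : (s*(y+1) - r*x) * (q*d*(Q*(e*ξ)))
      = s*d^2*(P*(Q-Q') + p*q' - 1) := by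
    linear_combination (-(r*Q*e*ξ)) * hd + (s*q*d*ξ) * he
      + (s*q*d*(Q-Q') - r*Q*(1-d*q')) * heξ + (s*d) * hdd
      + (s*d*(1-d*q')) * hrR - (s*d^2*(Q-Q')) * hsR
  have hM : 0 < q*d*(Q*(e*ξ)) := by
    have h1 : 0 < e*ξ := mul_pos he0 hξ0
    have h2 : 0 < Q*(e*ξ) := mul_pos (by linarith) h1
    exact mul_pos (mul_pos (by linarith) hd0) h2
  have hpq : 0 ≤ p*(q-q') := mul_nonneg (by linarith) (by linarith)
  have hPQ' : 0 ≤ P*Q' := mul_nonneg (by linarith) hQ'0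
  have hB1 : 0 < s*d^2*(1 + p*(q-q') + P*Q') := by
    have : (0:ℝ) < 1 + p*(q-q') + P*Q' := by linarith
    have h2 : 0 < s*d^2 := mul_pos (by linarith) (by positivity)
    exact mul_pos h2 this
  have hPQgap : (1:ℝ) ≤ P*(Q-Q') := by nlinarith
  have hpq' : (1:ℝ) ≤ p*q' := by nlinarith
  have hB2 : 0 < s*d^2*(P*(Q-Q') + p*q' - 1) := by
    have : (0:ℝ) < P*(Q-Q') + p*q' - 1 := by linarith
    have h2 : 0 < s*d^2 := mul_pos (by linarith) (by positivity)
    exact mul_pos h2 this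
  constructor
  · nlinarith [hK1, hM, hB1]
  · nlinarith [hK2, hM, hB2]

lemma main_lemma (ξ η : ℝ) (m : ℕ) (hξpos : 0 < ξ) (hηpos : 0 < η)
    (hξirr : Irrational ξ) (hηirr : Irrational η) (hm : 0 < m)
    (hmul : ξ * η = m) (n k : ℕ) (hn : 1 ≤ n) (hk : 1 ≤ k)
    (hne : Even n) (hko : Odd k)
    (hconn : cnum ξ n * cnum η k = (m : ℤ) * cden ξ n * cden η k) :
    cden η k ∣ cnum ξ n ∧ cden ξ n ∣ cnum η k ∧
    (cnum ξ n / cden η k) * (cnum η k / cden ξ n) = (m : ℤ) ∧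
    -2 * (cnum ξ n / cden η k) + 2 ≤
      (cnum ξ n / cden η k) * pquot ξ n - (cnum η k / cden ξ n) * pquot η k ∧
    (cnum ξ n / cden η k) * pquot ξ n - (cnum η k / cden ξ n) * pquot η k ≤
      2 * (cnum η k / cden ξ n) - 2 := by
  obtain ⟨hp1, hP1⟩ := conn_pos ξ η m hξpos hηpos hξirr hηirr hm n k hn hk hconn
  have h2n : 2 ≤ n := by
    rcases hne with ⟨t, ht⟩; omega
  obtain ⟨n1, rfl⟩ : ∃ j, n = j+2 := ⟨n-2, by omega⟩
  obtain ⟨k1, rfl⟩ : ∃ j, k = j+1 := ⟨k-1, by omega⟩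
  -- integer facts
  have hq1 : 1 ≤ cden ξ (n1+2) := cden_pos hξirr (n1+1)
  have hq'1 : 1 ≤ cden ξ (n1+1) := cden_pos hξirr n1
  have hQ1 : 1 ≤ cden η (k1+1) := cden_pos hηirr k1
  have hQ'0 : 0 ≤ cden η k1 := cden_nonneg hηirr k1
  have hqm : cden ξ (n1+1) ≤ cden ξ (n1+2) := cden_mono hξirr (n1+1)
  have hp'0 : 0 ≤ cnum ξ (n1+1) := cnum_nonneg hξpos hξirr (n1+1)
  have hP'0 : 0 ≤ cnum η k1 := cnum_nonneg hηpos hηirr k1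
  have hQgap : cden η k1 + 1 ≤ cden η (k1+1) := by
    match k1, hko with
    | 0, _ => simp [cden]
    | 1, hko => exact absurd hko (by decide)
    | (i+2), _ => exact cden_gap hηirr i
  -- parity
  have hodd_n1 : Odd (n1+1) := Nat.odd_iff.mpr (by have := Nat.even_iff.mp hne; omega)
  have heven_k1 : Even k1 := Nat.even_iff.mpr (by have := Nat.odd_iff.mp hko; omega)
  -- determinants
  have hdetξ : cnum ξ (n1+1) * cden ξ (n1+2) - cnum ξ (n1+2) * cden ξ (n1+1) = -1 := by
    have h := cf_det ξ (n1+1); rwa [hodd_n1.neg_one_pow] at h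
  have hdetη : cnum η k1 * cden η (k1+1) - cnum η (k1+1) * cden η k1 = 1 := by
    have h := cf_det η k1; rwa [heven_k1.neg_one_pow] at h
  -- coprimality and divisibility
  have hcopξ : IsCoprime (cnum ξ (n1+2)) (cden ξ (n1+2)) :=
    ⟨cden ξ (n1+1), -(cnum ξ (n1+1)), by linarith⟩
  have hcopη : IsCoprime (cnum η (k1+1)) (cden η (k1+1)) :=
    ⟨-(cden η k1), cnum η k1, by linarith⟩
  have hQdvd : cden η (k1+1) ∣ cnum ξ (n1+2) := by
    have h1 : cden η (k1+1) ∣ cnum ξ (n1+2) * cnum η (k1+1) :=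
      ⟨(m:ℤ) * cden ξ (n1+2), by linarith⟩
    exact hcopη.symm.dvd_of_dvd_mul_right h1
  have hqdvd : cden ξ (n1+2) ∣ cnum η (k1+1) := by
    have h1 : cden ξ (n1+2) ∣ cnum ξ (n1+2) * cnum η (k1+1) :=
      ⟨(m:ℤ) * cden η (k1+1), by linarith⟩
    exact hcopξ.symm.dvd_of_dvd_mul_left h1
  obtain ⟨r, hr⟩ := hQdvd
  obtain ⟨s, hs⟩ := hqdvd
  have hr1 : 1 ≤ r := by nlinarith
  have hs1 : 1 ≤ s := by nlinarith
  have hrs : r * s = (m:ℤ) := by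
    have hqQ : (0:ℤ) < cden ξ (n1+2) * cden η (k1+1) := by nlinarith
    have h2 : (cden ξ (n1+2) * cden η (k1+1)) * (r*s)
        = (cden ξ (n1+2) * cden η (k1+1)) * (m:ℤ) := by
      have := hconn; rw [hr, hs] at this; linear_combination this
    exact mul_left_cancel₀ (ne_of_gt hqQ) h2
  have hdivr : cnum ξ (n1+2) / cden η (k1+1) = r := by
    rw [hr]; exact Int.mul_ediv_cancel_left r (by omega)
  have hdivs : cnum η (k1+1) / cden ξ (n1+2) = s := by
    rw [hs]; exact Int.mul_ediv_cancel_left s (by omega)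
  rw [hdivr, hdivs]
  -- real part
  have hx1 : 1 < cq ξ (n1+2) := cq_gt_one hξirr (n1+1)
  have hy1 : 1 < cq η (k1+1) := cq_gt_one hηirr k1
  have hq1R : (1:ℝ) ≤ (cden ξ (n1+2):ℝ) := by exact_mod_cast hq1
  have hq'1R : (1:ℝ) ≤ (cden ξ (n1+1):ℝ) := by exact_mod_cast hq'1
  have hQ1R : (1:ℝ) ≤ (cden η (k1+1):ℝ) := by exact_mod_cast hQ1
  have hQ'0R : (0:ℝ) ≤ (cden η k1:ℝ) := by exact_mod_cast hQ'0
  have hqmR : (cden ξ (n1+1):ℝ) ≤ (cden ξ (n1+2):ℝ) := by exact_mod_cast hqm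
  have hQgapR : (cden η k1:ℝ) + 1 ≤ (cden η (k1+1):ℝ) := by exact_mod_cast hQgap
  have hp1R : (1:ℝ) ≤ (cnum ξ (n1+2):ℝ) := by exact_mod_cast hp1
  have hP1R : (1:ℝ) ≤ (cnum η (k1+1):ℝ) := by exact_mod_cast hP1
  have hr1R : (1:ℝ) ≤ (r:ℝ) := by exact_mod_cast hr1
  have hs1R : (1:ℝ) ≤ (s:ℝ) := by exact_mod_cast hs1
  have hrR : (cnum ξ (n1+2):ℝ) = (cden η (k1+1):ℝ) * r := by exact_mod_cast hr
  have hsR : (cnum η (k1+1):ℝ) = (cden ξ (n1+2):ℝ) * s := by exact_mod_cast hs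
  have hrsR : (r:ℝ) * (s:ℝ) = (m:ℝ) := by exact_mod_cast hrs
  have hconnR : (cnum ξ (n1+2):ℝ) * (cnum η (k1+1):ℝ)
      = (m:ℝ) * (cden ξ (n1+2):ℝ) * (cden η (k1+1):ℝ) := by exact_mod_cast hconn
  have hdetξR : (cnum ξ (n1+1):ℝ) * (cden ξ (n1+2):ℝ)
      - (cnum ξ (n1+2):ℝ) * (cden ξ (n1+1):ℝ) = -1 := by exact_mod_cast hdetξ
  have hdetηR : (cnum η k1:ℝ) * (cden η (k1+1):ℝ)
      - (cnum η (k1+1):ℝ) * (cden η k1:ℝ) = 1 := by exact_mod_cast hdetη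
  have hconvξ := cq_conv hξirr (n1+1)
  have hconvη := cq_conv hηirr k1
  have hsξ := cq_sign hξirr (n1+1)
  rw [hodd_n1.neg_one_pow] at hsξ
  have hsη := cq_sign hηirr k1
  rw [heven_k1.neg_one_pow] at hsη
  have hdenξ : (0:ℝ) < (cden ξ (n1+2):ℝ) * cq ξ (n1+2) + (cden ξ (n1+1):ℝ) := by nlinarith
  have hdenη : (0:ℝ) < (cden η (k1+1):ℝ) * cq η (k1+1) + (cden η k1:ℝ) := by nlinarith
  have hd : ((cnum ξ (n1+2):ℝ) - (cden ξ (n1+2):ℝ)*ξ)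
      * ((cden ξ (n1+2):ℝ) * cq ξ (n1+2) + (cden ξ (n1+1):ℝ)) = 1 := by
    linear_combination -hsξ
  have hd0 : (0:ℝ) < (cnum ξ (n1+2):ℝ) - (cden ξ (n1+2):ℝ)*ξ := by nlinarith [hd, hdenξ]
  have he0 : (0:ℝ) < (cden η (k1+1):ℝ)*η - (cnum η (k1+1):ℝ) := by nlinarith [hsη, hdenη]
  have heξ : ((cden η (k1+1):ℝ)*η - (cnum η (k1+1):ℝ)) * ξ
      = (s:ℝ) * ((cnum ξ (n1+2):ℝ) - (cden ξ (n1+2):ℝ)*ξ) := by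
    linear_combination (cden η (k1+1):ℝ) * hmul - ξ * hsR - (s:ℝ) * hrR
      - (cden η (k1+1):ℝ) * hrsR
  obtain ⟨ineq1, ineq2⟩ := real_key (cq ξ (n1+2)) (cq η (k1+1)) ξ η
    ((cnum ξ (n1+2):ℝ) - (cden ξ (n1+2):ℝ)*ξ)
    ((cden η (k1+1):ℝ)*η - (cnum η (k1+1):ℝ))
    (cnum ξ (n1+2):ℝ) (cden ξ (n1+2):ℝ) (cnum ξ (n1+1):ℝ) (cden ξ (n1+1):ℝ)
    (cnum η (k1+1):ℝ) (cden η (k1+1):ℝ) (cnum η k1:ℝ) (cden η k1:ℝ) (r:ℝ) (s:ℝ)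
    hd hsη rfl rfl heξ hrR hsR hd0 he0 hξpos hq1R hQ1R hs1R hr1R hq'1R hqmR hQ'0R
    hQgapR hp1R hP1R
  have hH : (m:ℝ) * (((cden ξ (n1+2):ℝ) * cq ξ (n1+2) + (cden ξ (n1+1):ℝ))
        * ((cden η (k1+1):ℝ) * cq η (k1+1) + (cden η k1:ℝ)))
      = ((cnum ξ (n1+2):ℝ) * cq ξ (n1+2) + (cnum ξ (n1+1):ℝ))
        * ((cnum η (k1+1):ℝ) * cq η (k1+1) + (cnum η k1:ℝ)) := by
    have h12 : (ξ * ((cden ξ (n1+2):ℝ) * cq ξ (n1+2) + (cden ξ (n1+1):ℝ)))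
        * (η * ((cden η (k1+1):ℝ) * cq η (k1+1) + (cden η k1:ℝ)))
        = ((cnum ξ (n1+2):ℝ) * cq ξ (n1+2) + (cnum ξ (n1+1):ℝ))
        * ((cnum η (k1+1):ℝ) * cq η (k1+1) + (cnum η k1:ℝ)) := by
      rw [hconvξ, hconvη]
    linear_combination h12 - (((cden ξ (n1+2):ℝ) * cq ξ (n1+2) + (cden ξ (n1+1):ℝ))
      * ((cden η (k1+1):ℝ) * cq η (k1+1) + (cden η k1:ℝ))) * hmul
  have hZR : (cnum ξ (n1+1):ℝ) * (cnum η k1:ℝ)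
      - (m:ℝ) * (cden ξ (n1+1):ℝ) * (cden η k1:ℝ)
      = (s:ℝ) * cq η (k1+1) - (r:ℝ) * cq ξ (n1+2) := by
    linear_combination -hH - (cq ξ (n1+2)) * (cq η (k1+1)) * hconnR
      - (cq ξ (n1+2)) * (r:ℝ) * hdetηR
      - (cq ξ (n1+2)) * (cnum η k1:ℝ) * hrR
      - (cq ξ (n1+2)) * (r:ℝ) * (cden η k1:ℝ) * hsR
      - (cq ξ (n1+2)) * (cden ξ (n1+2):ℝ) * (cden η k1:ℝ) * hrsR
      - (cq η (k1+1)) * (s:ℝ) * hdetξR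
      - (cq η (k1+1)) * (cnum ξ (n1+1):ℝ) * hsR
      - (cq η (k1+1)) * (s:ℝ) * (cden ξ (n1+1):ℝ) * hrR
      - (cq η (k1+1)) * (cden ξ (n1+1):ℝ) * (cden η (k1+1):ℝ) * hrsR
  -- integer bounds on Z
  have hZub : cnum ξ (n1+1) * cnum η k1 - (m:ℤ) * cden ξ (n1+1) * cden η k1 ≤ r - 1 := by
    have hlt : ((cnum ξ (n1+1) * cnum η k1 - (m:ℤ) * cden ξ (n1+1) * cden η k1 : ℤ) : ℝ)
        < (r:ℝ) := by push_cast; linarith [hZR, ineq1]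
    have h2 : cnum ξ (n1+1) * cnum η k1 - (m:ℤ) * cden ξ (n1+1) * cden η k1 < r := by
      exact_mod_cast hlt
    omega
  have hZlb : -s + 1 ≤ cnum ξ (n1+1) * cnum η k1 - (m:ℤ) * cden ξ (n1+1) * cden η k1 := by
    have hlt : (-s:ℝ) < ((cnum ξ (n1+1) * cnum η k1 - (m:ℤ) * cden ξ (n1+1) * cden η k1 : ℤ) : ℝ) := by
      push_cast; linarith [hZR, ineq2]
    have h2 : (-s:ℤ) < cnum ξ (n1+1) * cnum η k1 - (m:ℤ) * cden ξ (n1+1) * cden η k1 := by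
      exact_mod_cast hlt
    omega
  have hZubR : (cnum ξ (n1+1):ℝ) * (cnum η k1:ℝ)
      - (m:ℝ) * (cden ξ (n1+1):ℝ) * (cden η k1:ℝ) ≤ (r:ℝ) - 1 := by exact_mod_cast hZub
  have hZlbR : -(s:ℝ) + 1 ≤ (cnum ξ (n1+1):ℝ) * (cnum η k1:ℝ)
      - (m:ℝ) * (cden ξ (n1+1):ℝ) * (cden η k1:ℝ) := by exact_mod_cast hZlb
  -- floor bounds
  have hbx : (pquot ξ (n1+2):ℝ) < cq ξ (n1+2) := pquot_lt_cq hξirr (n1+2)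
  have hxb : cq ξ (n1+2) < (pquot ξ (n1+2):ℝ) + 1 := cq_lt_pquot (n1+2)
  have hBy : (pquot η (k1+1):ℝ) < cq η (k1+1) := pquot_lt_cq hηirr (k1+1)
  have hyB : cq η (k1+1) < (pquot η (k1+1):ℝ) + 1 := cq_lt_pquot (k1+1)
  have hr0R : (0:ℝ) < (r:ℝ) := by linarith
  have hs0R : (0:ℝ) < (s:ℝ) := by linarith
  have hint1 : (r:ℝ) * (cq ξ (n1+2) - 1) < (r:ℝ) * (pquot ξ (n1+2):ℝ) :=
    mul_lt_mul_of_pos_left (by linarith) hr0R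
  have hint2 : (s:ℝ) * (pquot η (k1+1):ℝ) < (s:ℝ) * cq η (k1+1) :=
    mul_lt_mul_of_pos_left hBy hs0R
  have hint3 : (r:ℝ) * (pquot ξ (n1+2):ℝ) < (r:ℝ) * cq ξ (n1+2) :=
    mul_lt_mul_of_pos_left hbx hr0R
  have hint4 : (s:ℝ) * (cq η (k1+1) - 1) < (s:ℝ) * (pquot η (k1+1):ℝ) :=
    mul_lt_mul_of_pos_left (by linarith) hs0R
  refine ⟨⟨r, hr⟩, ⟨s, hs⟩, hrs, ?_, ?_⟩
  · have g4 : (-2*(r:ℝ)+1) < (r:ℝ) * (pquot ξ (n1+2):ℝ) - (s:ℝ) * (pquot η (k1+1):ℝ) := by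
      linarith [hZR, hZubR]
    have g4i : (-2*r+1 : ℤ) < r * pquot ξ (n1+2) - s * pquot η (k1+1) := by
      have : ((-2*r+1 : ℤ):ℝ) < ((r * pquot ξ (n1+2) - s * pquot η (k1+1) : ℤ):ℝ) := by
        push_cast; linarith [g4]
      exact_mod_cast this
    linarith [Int.lt_iff_add_one_le.mp g4i]
  · have g5 : (r:ℝ) * (pquot ξ (n1+2):ℝ) - (s:ℝ) * (pquot η (k1+1):ℝ) < 2*(s:ℝ) - 1 := by
      linarith [hZR, hZlbR]
    have g5i : r * pquot ξ (n1+2) - s * pquot η (k1+1) < (2*s - 1 : ℤ) := by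
      have : ((r * pquot ξ (n1+2) - s * pquot η (k1+1) : ℤ):ℝ) < ((2*s-1 : ℤ):ℝ) := by
        push_cast; linarith [g5]
      exact_mod_cast this
    linarith [Int.lt_iff_add_one_le.mp g5i]

/-- Theorem 2.6: for a connected pair `(n,k)` the natural numbers
`r = p_{n-1}/Q_{k-1}` and `s = P_{k-1}/q_{n-1}` satisfy `r·s = m` and
`-2r + 2 ≤ r·b_n - s·B_k ≤ 2s - 2`. -/
theorem connected_partial_quotient_bounds
    (ξ η : ℝ) (m : ℕ) (hξpos : 0 < ξ) (hηpos : 0 < η)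
    (hξirr : Irrational ξ) (hηirr : Irrational η) (hm : 0 < m)
    (hmul : ξ * η = m) (n k : ℕ) (hn : 1 ≤ n) (hk : 1 ≤ k)
    (hconn : cnum ξ n * cnum η k = (m : ℤ) * cden ξ n * cden η k) :
    cden η k ∣ cnum ξ n ∧ cden ξ n ∣ cnum η k ∧
    (cnum ξ n / cden η k) * (cnum η k / cden ξ n) = (m : ℤ) ∧
    -2 * (cnum ξ n / cden η k) + 2 ≤
      (cnum ξ n / cden η k) * pquot ξ n - (cnum η k / cden ξ n) * pquot η k ∧
    (cnum ξ n / cden η k) * pquot ξ n - (cnum η k / cden ξ n) * pquot η k ≤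
      2 * (cnum η k / cden ξ n) - 2 := by
  have hmul' : η * ξ = m := by rw [mul_comm]; exact hmul
  have hconn' : cnum η k * cnum ξ n = (m : ℤ) * cden η k * cden ξ n := by
    linear_combination hconn
  rcases conn_parity ξ η m hξpos hηpos hξirr hηirr hm hmul n k hn hk hconn with
    ⟨hne, hko⟩ | ⟨hno, hke⟩
  · exact main_lemma ξ η m hξpos hηpos hξirr hηirr hm hmul n k hn hk hne hko hconn
  · obtain ⟨d1, d2, hprod, hlo, hhi⟩ :=
      main_lemma η ξ m hηpos hξpos hηirr hξirr hm hmul' k n hk hn hke hno hconn'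
    exact ⟨d2, d1, by rw [mul_comm]; exact hprod, by linarith, by linarith⟩
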